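/- Let ν and λ be finite Borel measures on ℝ whose supports each contain at least two points, and let u, v ∈ ℝ with u ∉ supp ν and v ∉ supp λ. For k = 2, 3, 4 set a_k := ∫_ℝ (x − u)^{−k} dν(x) and b_k := ∫_ℝ (x − v)^{−k} dλ(x). Assume a₂·b₂ = 1 and (1 + a₂)²·b₃ + b₂·(1 + b₂)²·a₃ = 0. Then 2·(1 + a₂)⁴·b₃² < b₂·((1 + a₂)⁴·b₄ + (1 + b₂)⁴·a₄). (This expresses that the third derivative z'''(ω_β⁰) of the local inverse of the subordination function is strictly negative whenever its first and second derivatives vanish.) -/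

import Mathlib

open MeasureTheory Complex Set Filter Topology

noncomputable section

/-- Cauchy–Stieltjes transform `m_μ(z) = ∫ (x − z)⁻¹ dμ(x)`. -/
def mTr (μ : Measure ℝ) (z : ℂ) : ℂ := ∫ x, ((x : ℂ) - z)⁻¹ ∂μ

/-- Negative reciprocal Cauchy–Stieltjes transform `F_μ(z) = −1/m_μ(z)`. -/
def FTr (μ : Measure ℝ) (z : ℂ) : ℂ := -(mTr μ z)⁻¹

/-- `I_ν(ω) = ∫ |x − ω|⁻² dν(x)`. -/
def Inu (ν : Measure ℝ) (ω : ℂ) : ℝ := ∫ x, (Complex.normSq ((x : ℂ) - ω))⁻¹ ∂ν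

/-- Topological support of a Borel measure on ℝ. -/
def msupport (μ : Measure ℝ) : Set ℝ := {x | ∀ U : Set ℝ, IsOpen U → x ∈ U → 0 < μ U}

/-- `μh` is a Nevanlinna measure for the (centered) measure `μ`:
a finite Borel measure with `F_μ(ω) − ω = ∫ (x − ω)⁻¹ dμh(x)` on ℂ⁺. -/
def IsNevanlinna (μ μh : Measure ℝ) : Prop :=
  IsFiniteMeasure μh ∧ ∀ ω : ℂ, 0 < ω.im → FTr μ ω - ω = ∫ x, ((x : ℂ) - ω)⁻¹ ∂μh

/-- Subordination function for `μ` at time `t`. -/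
structure IsSubordination (μ : Measure ℝ) (t : ℝ) (ω : ℂ → ℂ) : Prop where
  contOn : ContinuousOn ω {z : ℂ | 0 ≤ z.im}
  mapsTo : ∀ z : ℂ, 0 ≤ z.im → 0 ≤ (ω z).im
  diff : DifferentiableOn ℂ ω {z : ℂ | 0 < z.im}
  im_ge : ∀ z : ℂ, 0 < z.im → z.im ≤ (ω z).im
  subord : ∀ z : ℂ, 0 < z.im → (t : ℂ) * ω z - z = ((t - 1 : ℝ) : ℂ) * FTr μ (ω z)

/-- `ν = μ^{⊞t}`, the free convolution power associated with the subordination function `ω`. -/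
def IsFreePower (μ : Measure ℝ) (t : ℝ) (ω : ℂ → ℂ) (ν : Measure ℝ) : Prop :=
  IsProbabilityMeasure ν ∧ ∀ z : ℂ, 0 < z.im → mTr ν z = mTr μ (ω z)

/-- Subordination functions for the pair `(μa, μb)`. -/
structure IsPairSubordination (μa μb : Measure ℝ) (ωa ωb : ℂ → ℂ) : Prop where
  diff_a : DifferentiableOn ℂ ωa {z : ℂ | 0 < z.im}
  diff_b : DifferentiableOn ℂ ωb {z : ℂ | 0 < z.im}
  im_a : ∀ z : ℂ, 0 < z.im → z.im ≤ (ωa z).im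
  im_b : ∀ z : ℂ, 0 < z.im → z.im ≤ (ωb z).im
  lim_a : Tendsto (fun η : ℝ => ωa (η * Complex.I) / (η * Complex.I)) atTop (nhds 1)
  lim_b : Tendsto (fun η : ℝ => ωb (η * Complex.I) / (η * Complex.I)) atTop (nhds 1)
  eq_a : ∀ z : ℂ, 0 < z.im → ωa z + ωb z - z = FTr μa (ωb z)
  eq_b : ∀ z : ℂ, 0 < z.im → ωa z + ωb z - z = FTr μb (ωa z)

/-- `ν = μa ⊞ μb`, the free additive convolution. -/
def IsFreeConv (μa μb : Measure ℝ) (ωb : ℂ → ℂ) (ν : Measure ℝ) : Prop :=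
  IsProbabilityMeasure ν ∧ ∀ z : ℂ, 0 < z.im → mTr ν z = mTr μa (ωb z)

/-- Assumption 1 of the paper: `μ` is a centered, compactly supported probability
measure whose singular part consists of finitely many atoms and whose absolutely
continuous part has a density `ρ` of Jacobi type, supported on finitely many
disjoint compact intervals with power-law behavior (exponents in `(−1,1)`). -/
structure JacobiData (μ : Measure ℝ) where
  ρ : ℝ → ℝ
  n : ℕ
  npos : 0 < n
  Em : Fin n → ℝ
  Ep : Fin n → ℝ
  βm : Fin n → ℝ
  βp : Fin n → ℝ
  Cj : Fin n → ℝ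
  atoms : Finset ℝ
  w : ℝ → ℝ
  prob : IsProbabilityMeasure μ
  compactSupp : ∃ K : Set ℝ, IsCompact K ∧ μ Kᶜ = 0
  centered : ∫ x, x ∂μ = 0
  lt : ∀ j, Em j < Ep j
  disj : ∀ i j, i ≠ j → Disjoint (Set.Icc (Em i) (Ep i)) (Set.Icc (Em j) (Ep j))
  βm_mem : ∀ j, βm j ∈ Set.Ioo (-1 : ℝ) 1
  βp_mem : ∀ j, βp j ∈ Set.Ioo (-1 : ℝ) 1
  Cj_ge : ∀ j, 1 ≤ Cj j
  ρ_nonneg : ∀ x, 0 ≤ ρ x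
  ρ_supp : ∀ x, x ∉ ⋃ j, Set.Icc (Em j) (Ep j) → ρ x = 0
  powerLaw : ∀ j, ∀ᵐ E ∂(volume.restrict (Set.Icc (Em j) (Ep j))),
      (Cj j)⁻¹ * ((E - Em j) ^ (βm j) * (Ep j - E) ^ (βp j)) ≤ ρ E ∧
      ρ E ≤ Cj j * ((E - Em j) ^ (βm j) * (Ep j - E) ^ (βp j))
  w_nonneg : ∀ a, 0 ≤ w a
  decomp : μ = volume.withDensity (fun x => ENNReal.ofReal (ρ x))
      + ∑ a ∈ atoms, ENNReal.ofReal (w a) • Measure.dirac a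

/-- The support of the absolutely continuous part of `μ`. -/
def JacobiData.acSupport {μ : Measure ℝ} (d : JacobiData μ) : Set ℝ :=
  ⋃ j, Set.Icc (d.Em j) (d.Ep j)

/-- The Hölder condition (5.1)/(2.8) of the paper on the density of `μ_ac`. -/
def JacobiData.HolderCond {μ : Measure ℝ} (d : JacobiData μ) : Prop :=
  ∀ j, ∃ L γ : NNReal, 0 < γ ∧
    HolderOnWith L γ
      (fun E => d.ρ E / ((E - d.Em j) ^ (d.βm j) * (d.Ep j - E) ^ (d.βp j)))
      (Set.Icc (d.Em j) (d.Ep j))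

/-- Assumption 2 of the paper: a centered, absolutely continuous probability measure
supported on finitely many disjoint compact intervals, with density of Jacobi type. -/
structure AbsJacobiData (μ : Measure ℝ) where
  ρ : ℝ → ℝ
  n : ℕ
  npos : 0 < n
  Am : Fin n → ℝ
  Ap : Fin n → ℝ
  sm : Fin n → ℝ
  sp : Fin n → ℝ
  Cj : Fin n → ℝ
  prob : IsProbabilityMeasure μ
  centered : ∫ x, x ∂μ = 0
  lt : ∀ j, Am j < Ap j
  disj : ∀ i j, i ≠ j → Disjoint (Set.Icc (Am i) (Ap i)) (Set.Icc (Am j) (Ap j))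
  sm_mem : ∀ j, sm j ∈ Set.Ioo (-1 : ℝ) 1
  sp_mem : ∀ j, sp j ∈ Set.Ioo (-1 : ℝ) 1
  Cj_ge : ∀ j, 1 ≤ Cj j
  ρ_nonneg : ∀ x, 0 ≤ ρ x
  ρ_supp : ∀ x, x ∉ ⋃ j, Set.Icc (Am j) (Ap j) → ρ x = 0
  powerLaw : ∀ j, ∀ᵐ E ∂(volume.restrict (Set.Icc (Am j) (Ap j))),
      (Cj j)⁻¹ * ((E - Am j) ^ (sm j) * (Ap j - E) ^ (sp j)) ≤ ρ E ∧
      ρ E ≤ Cj j * ((E - Am j) ^ (sm j) * (Ap j - E) ^ (sp j))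
  decomp : μ = volume.withDensity (fun x => ENNReal.ofReal (ρ x))


lemma strictCS (ν : Measure ℝ) (hfin : IsFiniteMeasure ν)
    (hsupp : ∃ x ∈ msupport ν, ∃ y ∈ msupport ν, x ≠ y)
    (u : ℝ) (hu : u ∉ msupport ν) :
    0 < ∫ x, ((x - u) ^ 2)⁻¹ ∂ν ∧
    (∫ x, ((x - u) ^ 3)⁻¹ ∂ν) ^ 2
      < (∫ x, ((x - u) ^ 2)⁻¹ ∂ν) * (∫ x, ((x - u) ^ 4)⁻¹ ∂ν) := by
  classical
  -- a neighborhood of u of measure zero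
  simp only [msupport, Set.mem_setOf_eq, not_forall] at hu
  obtain ⟨U, hUopen, huU, hUz⟩ := hu
  rw [not_lt, le_zero_iff] at hUz
  obtain ⟨δ, hδ, hball⟩ := Metric.isOpen_iff.1 hUopen u huU
  have hballz : ν (Metric.ball u δ) = 0 := measure_mono_null hball hUz
  have hae : ∀ᵐ x ∂ν, δ ≤ |x - u| := by
    rw [ae_iff]
    refine measure_mono_null (fun x hx => ?_) hballz
    simp only [Set.mem_setOf_eq, not_le] at hx
    simpa [Metric.mem_ball, Real.dist_eq] using hx
  -- measurability and integrability of the moment functions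
  have hmeas : ∀ k : ℕ, AEStronglyMeasurable (fun x : ℝ => ((x - u) ^ k)⁻¹) ν := by
    intro k
    exact (((measurable_id.sub_const u).pow_const k).inv).aestronglyMeasurable
  have hint : ∀ k : ℕ, Integrable (fun x : ℝ => ((x - u) ^ k)⁻¹) ν := by
    intro k
    refine Integrable.mono' (integrable_const ((δ ^ k)⁻¹)) (hmeas k) ?_
    filter_upwards [hae] with x hx
    rw [norm_inv, norm_pow, Real.norm_eq_abs]
    gcongr
  -- positivity of ν on ℝ and on {u}ᶜ
  obtain ⟨p, hp, q, hq, hpq⟩ := hsupp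
  have hνuniv : 0 < ν Set.univ := hp Set.univ isOpen_univ (Set.mem_univ p)
  have hνu : ν {u} = 0 :=
    measure_mono_null (by simpa [Metric.mem_ball] using hδ) hballz
  have hcompl : 0 < ν ({u}ᶜ) := by
    by_contra h
    rw [not_lt, le_zero_iff] at h
    have : ν Set.univ = 0 := by
      have := measure_union_le (μ := ν) ({u}ᶜ) {u}
      rw [Set.compl_union_self] at this
      simpa [h, hνu] using this
    exact absurd this hνuniv.ne'
  set a2 := ∫ x, ((x - u) ^ 2)⁻¹ ∂ν with ha2
  set a3 := ∫ x, ((x - u) ^ 3)⁻¹ ∂ν with ha3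
  set a4 := ∫ x, ((x - u) ^ 4)⁻¹ ∂ν with ha4
  have ha2pos : 0 < a2 := by
    rw [ha2, integral_pos_iff_support_of_nonneg (fun x => by positivity) (hint 2)]
    have : Function.support (fun x : ℝ => ((x - u) ^ 2)⁻¹) = {u}ᶜ := by
      ext x
      simp [Function.mem_support, sub_eq_zero]
    rwa [this]
  refine ⟨ha2pos, ?_⟩
  -- the quadratic form
  set g := fun x : ℝ => (a2 * ((x - u) ^ 2)⁻¹ - a3 * (x - u)⁻¹) ^ 2 with hg
  have hgeq : ∀ x : ℝ, g x =
      a2 ^ 2 * ((x - u) ^ 4)⁻¹ - 2 * a2 * a3 * ((x - u) ^ 3)⁻¹ + a3 ^ 2 * ((x - u) ^ 2)⁻¹ := by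
    intro x
    simp only [hg, ← inv_pow]
    ring
  have hgint : Integrable g ν := by
    rw [funext hgeq]
    exact (((hint 4).const_mul _).sub ((hint 3).const_mul _)).add ((hint 2).const_mul _)
  have hgval : ∫ x, g x ∂ν = a2 ^ 2 * a4 - 2 * a2 * a3 * a3 + a3 ^ 2 * a2 := by
    rw [integral_congr_ae (Filter.Eventually.of_forall hgeq)]
    have i4 : Integrable (fun x : ℝ => a2 ^ 2 * ((x - u) ^ 4)⁻¹) ν := (hint 4).const_mul _
    have i3 : Integrable (fun x : ℝ => 2 * a2 * a3 * ((x - u) ^ 3)⁻¹) ν := (hint 3).const_mul _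
    have i2' : Integrable (fun x : ℝ => a3 ^ 2 * ((x - u) ^ 2)⁻¹) ν := (hint 2).const_mul _
    have i43 : Integrable (fun x : ℝ => a2 ^ 2 * ((x - u) ^ 4)⁻¹ - 2 * a2 * a3 * ((x - u) ^ 3)⁻¹) ν := i4.sub i3
    rw [integral_add i43 i2', integral_sub i4 i3,
      integral_const_mul, integral_const_mul, integral_const_mul]
  have hgpos : 0 < ∫ x, g x ∂ν := by
    rcases lt_or_eq_of_le (integral_nonneg (f := g) (fun x => sq_nonneg _)) with h | h
    · exact h
    have hzero : g =ᵐ[ν] 0 := (integral_eq_zero_iff_of_nonneg (fun x => show (0:ℝ) ≤ g x from sq_nonneg _) hgint).1 h.symm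
    -- derive that ν-a.e. x equals a fixed point
    set c : ℝ := u + (a3 / a2)⁻¹ with hc
    have haec : ∀ᵐ x ∂ν, x = c := by
      filter_upwards [hzero, hae] with x hx hdx
      have hxne : x - u ≠ 0 := by
        intro h0
        rw [h0] at hdx
        simp at hdx
        linarith
      have hx' : a2 * ((x - u) ^ 2)⁻¹ - a3 * (x - u)⁻¹ = 0 := by
        have := hx
        simpa [hg] using pow_eq_zero_iff (n := 2) (by norm_num) |>.1 this
      have hinv : (x - u)⁻¹ ≠ 0 := inv_ne_zero hxne
      have h1 : a2 * (x - u)⁻¹ = a3 := by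
        have : ((x - u)^2)⁻¹ = (x - u)⁻¹ * (x - u)⁻¹ := by
          rw [← inv_pow]; ring
        rw [this] at hx'
        have := mul_right_cancel₀ hinv (by linarith [hx'] : a2 * (x - u)⁻¹ * (x - u)⁻¹ = a3 * (x - u)⁻¹)
        exact this
      have hxval : (x - u)⁻¹ = a3 / a2 := by
        field_simp at h1 ⊢
        linarith
      have ha3ne : a3 / a2 ≠ 0 := by rw [← hxval]; exact hinv
      have : x - u = (a3 / a2)⁻¹ := by
        rw [← hxval, inv_inv]
      rw [hc]; linarith
    have : ν ({c}ᶜ) = 0 := by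
      rw [ae_iff] at haec
      refine measure_mono_null (fun x hx => ?_) haec
      simpa using hx
    -- contradiction with two support points
    have hone : p ≠ c ∨ q ≠ c := by
      by_contra h
      push_neg at h
      exact hpq (h.1.trans h.2.symm)
    rcases hone with h | h
    · exact absurd (hp ({c}ᶜ) isOpen_compl_singleton h) (by simp [this])
    · exact absurd (hq ({c}ᶜ) isOpen_compl_singleton h) (by simp [this])
  rw [hgval] at hgpos
  nlinarith [ha2pos, hgpos]

/-- negativity of the third derivative of the local inverse of the
subordination function when its first two derivatives vanish, expressed via the moments
`a_k = ∫ (x−u)⁻ᵏ dν`, `b_k = ∫ (x−v)⁻ᵏ dλ`. -/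
theorem statement10 (ν lam : Measure ℝ)
    (hfinν : IsFiniteMeasure ν) (hfinlam : IsFiniteMeasure lam)
    (hsuppν : ∃ x ∈ msupport ν, ∃ y ∈ msupport ν, x ≠ y)
    (hsupplam : ∃ x ∈ msupport lam, ∃ y ∈ msupport lam, x ≠ y)
    (u v : ℝ) (hu : u ∉ msupport ν) (hv : v ∉ msupport lam)
    (a2 a3 a4 b2 b3 b4 : ℝ)
    (ha2 : a2 = ∫ x, ((x - u) ^ 2)⁻¹ ∂ν)
    (ha3 : a3 = ∫ x, ((x - u) ^ 3)⁻¹ ∂ν)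
    (ha4 : a4 = ∫ x, ((x - u) ^ 4)⁻¹ ∂ν)
    (hb2 : b2 = ∫ x, ((x - v) ^ 2)⁻¹ ∂lam)
    (hb3 : b3 = ∫ x, ((x - v) ^ 3)⁻¹ ∂lam)
    (hb4 : b4 = ∫ x, ((x - v) ^ 4)⁻¹ ∂lam)
    (h1 : a2 * b2 = 1)
    (h2 : (1 + a2) ^ 2 * b3 + b2 * (1 + b2) ^ 2 * a3 = 0) :
    2 * (1 + a2) ^ 4 * b3 ^ 2 < b2 * ((1 + a2) ^ 4 * b4 + (1 + b2) ^ 4 * a4) := by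
  obtain ⟨hA, hCSa⟩ := strictCS ν hfinν hsuppν u hu
  obtain ⟨hB, hCSb⟩ := strictCS lam hfinlam hsupplam v hv
  rw [← ha2] at hA
  rw [← ha3, ← ha2, ← ha4] at hCSa
  rw [← hb2] at hB
  rw [← hb3, ← hb2, ← hb4] at hCSb
  have e : (1 + a2) ^ 2 * b3 = -(b2 * (1 + b2) ^ 2 * a3) := by linarith
  have esq : (1 + a2) ^ 4 * b3 ^ 2 = b2 ^ 2 * (1 + b2) ^ 4 * a3 ^ 2 := by
    calc (1 + a2) ^ 4 * b3 ^ 2 = ((1 + a2) ^ 2 * b3) ^ 2 := by ring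
      _ = (-(b2 * (1 + b2) ^ 2 * a3)) ^ 2 := by rw [e]
      _ = b2 ^ 2 * (1 + b2) ^ 4 * a3 ^ 2 := by ring
  have hA4 : (0:ℝ) < (1 + a2) ^ 4 := by positivity
  have hc : (0:ℝ) < b2 ^ 2 * (1 + b2) ^ 4 := by positivity
  have t1 : (1 + a2) ^ 4 * b3 ^ 2 < (1 + a2) ^ 4 * (b2 * b4) :=
    mul_lt_mul_of_pos_left hCSb hA4
  have t2 : b2 ^ 2 * (1 + b2) ^ 4 * a3 ^ 2 < b2 ^ 2 * (1 + b2) ^ 4 * (a2 * a4) :=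
    mul_lt_mul_of_pos_left hCSa hc
  have t3 : b2 ^ 2 * (1 + b2) ^ 4 * (a2 * a4) = b2 * (1 + b2) ^ 4 * a4 := by
    linear_combination (b2 * (1 + b2) ^ 4 * a4) * h1
  nlinarith [t1, t2, t3, esq]

end
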